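/- arXiv:1406.2411 — 7 statements merged into one kernel-verified Lean document; each statement's English description precedes it below -/
import Mathlib

section
/- The automorphisms τ and κ of the free group F_3 on x, y, z defined by τ: x ↦ x^r y x^{-r}, y ↦ x, z ↦ z and κ: x ↦ x, y ↦ y^r z y^{-r}, z ↦ y satisfy the braid relation τκτ = κτκ, for every integer r. -/
open FreeGroup

/-- Family (A_r–1): τ : x ↦ xʳ y x⁻ʳ, y ↦ x, z ↦ z and κ : x ↦ x, y ↦ yʳ z y⁻ʳ, z ↦ y
satisfy the braid relation τκτ = κτκ on the free group on x, y, z. -/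
theorem stmt3 (r : ℤ) :
    letI x : FreeGroup (Fin 3) := of 0
    letI y : FreeGroup (Fin 3) := of 1
    letI z : FreeGroup (Fin 3) := of 2
    letI τ : FreeGroup (Fin 3) →* FreeGroup (Fin 3) :=
      FreeGroup.lift ![x ^ r * y * x ^ (-r), x, z]
    letI κ : FreeGroup (Fin 3) →* FreeGroup (Fin 3) :=
      FreeGroup.lift ![x, y ^ r * z * y ^ (-r), y]
    τ.comp (κ.comp τ) = κ.comp (τ.comp κ) := by
  apply FreeGroup.ext_hom
  intro i
  fin_cases i <;>
    simp [MonoidHom.comp_apply, map_mul, map_zpow, Matrix.cons_val_zero, Matrix.cons_val_one] <;>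
    group
end

section
/- The automorphisms τ and κ of the free group F_3 on x, y, z defined by τ: x ↦ x y^{-1} x, y ↦ x, z ↦ z and κ: x ↦ x, y ↦ y z^{-1} y, z ↦ y satisfy the braid relation τκτ = κτκ. -/
open FreeGroup

/-- Case (C–1): τ : x ↦ x y⁻¹ x, y ↦ x, z ↦ z and κ : x ↦ x, y ↦ y z⁻¹ y, z ↦ y
satisfy the braid relation τκτ = κτκ on the free group on x, y, z. -/
theorem stmt4 :
    letI x : FreeGroup (Fin 3) := of 0
    letI y : FreeGroup (Fin 3) := of 1
    letI z : FreeGroup (Fin 3) := of 2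
    letI τ : FreeGroup (Fin 3) →* FreeGroup (Fin 3) :=
      FreeGroup.lift ![x * y⁻¹ * x, x, z]
    letI κ : FreeGroup (Fin 3) →* FreeGroup (Fin 3) :=
      FreeGroup.lift ![x, y * z⁻¹ * y, y]
    τ.comp (κ.comp τ) = κ.comp (τ.comp κ) := by
  apply FreeGroup.ext_hom
  intro i
  fin_cases i <;>
    simp [MonoidHom.comp_apply, FreeGroup.lift_apply_of, map_mul, map_inv, Matrix.cons_val_zero,
      Matrix.cons_val_one, Matrix.head_cons, mul_assoc]
end

section
/- The automorphisms τ and κ of the free group F_3 on x, y, z defined by τ: x ↦ x^{-1} y^{-1} x, y ↦ y^2 x, z ↦ z and κ: x ↦ x, y ↦ y^{-1} z^{-1} y, z ↦ z^2 y satisfy the braid relation τκτ = κτκ. -/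
open FreeGroup

/-- Case (D–1): τ : x ↦ x⁻¹ y⁻¹ x, y ↦ y² x, z ↦ z and κ : x ↦ x, y ↦ y⁻¹ z⁻¹ y, z ↦ z² y
satisfy the braid relation τκτ = κτκ on the free group on x, y, z. -/
theorem stmt5 :
    letI x : FreeGroup (Fin 3) := of 0
    letI y : FreeGroup (Fin 3) := of 1
    letI z : FreeGroup (Fin 3) := of 2
    letI τ : FreeGroup (Fin 3) →* FreeGroup (Fin 3) :=
      FreeGroup.lift ![x⁻¹ * y⁻¹ * x, y ^ 2 * x, z]
    letI κ : FreeGroup (Fin 3) →* FreeGroup (Fin 3) :=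
      FreeGroup.lift ![x, y⁻¹ * z⁻¹ * y, z ^ 2 * y]
    τ.comp (κ.comp τ) = κ.comp (τ.comp κ) := by
  apply FreeGroup.ext_hom
  intro i
  fin_cases i <;>
    simp [MonoidHom.comp_apply, FreeGroup.lift_apply_of, pow_two, mul_assoc,
      Matrix.cons_val_zero, Matrix.cons_val_one, Matrix.head_cons]
end

section
/- In the free group on x, y, for integers r, r', the equation (x^r y x^{r'})^r · x^r = x^r · y^r holds if and only if r' = -r or r = 0. -/
open FreeGroup

/-- In the free group on x, y: (xʳ y xʳ')ʳ xʳ = xʳ yʳ holds iff r' = -r or r = 0. -/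
theorem stmt9 (r r' : ℤ) :
    letI x : FreeGroup (Fin 2) := of 0
    letI y : FreeGroup (Fin 2) := of 1
    ((x ^ r * y * x ^ r') ^ r * x ^ r = x ^ r * y ^ r) ↔ (r' = -r ∨ r = 0) := by
  constructor
  · intro h
    -- apply the homomorphism x ↦ 1, y ↦ 0 into Multiplicative ℤ
    let φ : FreeGroup (Fin 2) →* Multiplicative ℤ :=
      FreeGroup.lift (fun i => if i = 0 then Multiplicative.ofAdd (1 : ℤ) else 1)
    have key := congrArg (fun g => Multiplicative.toAdd (φ g)) h
    simp [φ, toAdd_zpow] at key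
    rcases key with h1 | h1
    · exact Or.inr h1
    · exact Or.inl (by linarith)
  · rintro (h | h)
    · subst h
      rw [zpow_neg, conj_zpow, mul_assoc, inv_mul_cancel, mul_one]
    · subst h
      simp
end

section
/- In the free group on x, y, if integers r, r' satisfy (x^r y^{-1} x^{r'})^r = x^r y^{-r'} x^{r'}, then (r, r') = (0, 0) or (r, r') = (1, 1) or r' = -r with r = 0 (i.e., the only solutions are (0,0) and (1,1)). -/
open FreeGroup

/-- In the free group on x, y: if (xʳ y⁻¹ xʳ')ʳ = xʳ y⁻ʳ' xʳ' then (r, r') = (0,0) or (1,1). -/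
theorem stmt10 (r r' : ℤ)
    (h : (of (0 : Fin 2) ^ r * (of (1 : Fin 2))⁻¹ * of (0 : Fin 2) ^ r') ^ r =
      of (0 : Fin 2) ^ r * of (1 : Fin 2) ^ (-r') * of (0 : Fin 2) ^ r') :
    (r = 0 ∧ r' = 0) ∨ (r = 1 ∧ r' = 1) := by
  have hf := congrArg (FreeGroup.lift
    (fun i : Fin 2 => if i = 0 then Multiplicative.ofAdd (1:ℤ) else 1)) h
  have hg := congrArg (FreeGroup.lift
    (fun i : Fin 2 => if i = 1 then Multiplicative.ofAdd (1:ℤ) else 1)) h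
  simp at hf hg
  simp only [← ofAdd_zsmul, ← ofAdd_add, Multiplicative.ofAdd.injective.eq_iff,
    smul_eq_mul, mul_one] at hf hg
  subst hg
  have h0 : r * (r - 1) = 0 := by nlinarith
  rcases mul_eq_zero.mp h0 with h1 | h1 <;> omega
end

section
/- In the free group on x, y, if r ≠ -r' then the element x^r y^{-r'} x^{r'} is primitive whenever y^{-r'} ≠ 1, in the sense that it is not a proper power: if x^r y^{-r'} x^{r'} = w^k for some element w and integer k ≥ 2, then r = -r' or r' = 0. -/
open FreeGroup

namespace Stmt11Aux

open List

variable {α : Type*} [DecidableEq α]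

/-- The no-cancellation relation between adjacent letters. -/
def Rel : (α × Bool) → (α × Bool) → Prop := fun a b => ¬(a.1 = b.1 ∧ a.2 = !b.2)

lemma reduce_eq_self {L : List (α × Bool)} (h : List.Chain' Rel L) :
    FreeGroup.reduce L = L := by
  induction L with
  | nil => rfl
  | cons a t ih =>
    rw [FreeGroup.reduce.cons, ih h.tail]
    cases t with
    | nil => rfl
    | cons b t2 =>
      have hab : ¬(a.1 = b.1 ∧ a.2 = !b.2) := (List.isChain_cons_cons.1 h).1
      simp [hab]

lemma chain'_reduce (L : List (α × Bool)) : List.Chain' Rel (FreeGroup.reduce L) := by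
  induction L with
  | nil => exact List.isChain_nil
  | cons a t ih =>
    rw [FreeGroup.reduce.cons]
    cases h : FreeGroup.reduce t with
    | nil => exact List.isChain_singleton _
    | cons b t2 =>
      rw [h] at ih
      by_cases hc : a.1 = b.1 ∧ a.2 = !b.2
      · simpa [hc, List.Chain'] using ih.tail
      · simpa [hc, List.Chain'] using List.isChain_cons_cons.2 ⟨hc, ih⟩

lemma chain'_toWord (x : FreeGroup α) : List.Chain' Rel x.toWord := by
  rw [← FreeGroup.reduce_toWord]
  exact chain'_reduce _

lemma invRev_cons (a : α × Bool) (L : List (α × Bool)) :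
    invRev (a :: L) = invRev L ++ [(a.1, !a.2)] := by
  simp [invRev]

lemma invRev_replicate (n : ℕ) (x : α) (b : Bool) :
    invRev (List.replicate n (x, b)) = List.replicate n (x, !b) := by
  simp [invRev]

/-- Cyclic reduction of reduced words. -/
lemma cyclic_decomp_aux (n : ℕ) :
    ∀ L : List (α × Bool), L.length ≤ n → List.Chain' Rel L →
      ∃ C W : List (α × Bool), L = C ++ W ++ invRev C ∧
        (∀ a ∈ W.getLast?, ∀ b ∈ W.head?, Rel a b) := by
  induction n with
  | zero =>
    intro L hL _
    have hL0 : L = [] := List.length_eq_zero_iff.1 (Nat.le_zero.1 hL)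
    subst hL0
    exact ⟨[], [], by simp [invRev], by simp⟩
  | succ n ih =>
    intro L hL hch
    by_cases hCR : ∀ a ∈ L.getLast?, ∀ b ∈ L.head?, Rel a b
    · exact ⟨[], L, by simp [invRev], hCR⟩
    · push_neg at hCR
      obtain ⟨a, ha, b, hb, hab⟩ := hCR
      rw [Rel, not_not] at hab
      cases L with
      | nil => simp at hb
      | cons x T =>
        have hxb : x = b := by simpa using hb
        rw [← hxb] at hab
        cases T with
        | nil =>
          have hax : x = a := by simpa using ha
          rw [hax] at hab
          simp at hab
        | cons c T' =>
          set T := c :: T' with hT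
          have hTne : T ≠ [] := by simp [hT]
          have haT : a = T.getLast hTne := by
            have hgl := List.getLast?_eq_getLast (l := x :: T) (by simp)
            rw [hgl] at ha
            have := Option.mem_some_iff.1 ha
            rw [← this]
            simp [List.getLast_cons hTne]
          have hLsplit : x :: T = [x] ++ T.dropLast ++ [a] := by
            conv_lhs => rw [← List.dropLast_append_getLast (l := T) hTne]
            simp [haT]
          have hchM : List.Chain' Rel T.dropLast := by
            apply hch.infix
            exact ⟨[x], [a], by rw [← hLsplit]⟩
          have hlen : T.dropLast.length ≤ n := by
            rw [List.length_dropLast]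
            simp at hL
            omega
          obtain ⟨C', W, hW, hWCR⟩ := ih T.dropLast hlen hchM
          refine ⟨x :: C', W, ?_, hWCR⟩
          rw [hLsplit, hW, invRev_cons]
          have hba : (x.1, !x.2) = a := by
            obtain ⟨h1, h2⟩ := hab
            ext
            · simp [h1]
            · simp [h2]
          rw [hba]
          simp

lemma cyclic_decomp (x : FreeGroup α) :
    ∃ C W : List (α × Bool), x.toWord = C ++ W ++ invRev C ∧
      (∀ a ∈ W.getLast?, ∀ b ∈ W.head?, Rel a b) :=
  cyclic_decomp_aux x.toWord.length x.toWord le_rfl (chain'_toWord x)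

lemma head?_flatten_rep (W : List (α × Bool)) (hW : W ≠ []) (k : ℕ) (hk : 1 ≤ k) :
    (List.flatten (List.replicate k W)).head? = W.head? := by
  obtain ⟨m, rfl⟩ : ∃ m, k = m + 1 := ⟨k - 1, by omega⟩
  rw [List.replicate_succ, List.flatten_cons, List.head?_append_of_ne_nil _ hW]

lemma getLast?_flatten_rep (W : List (α × Bool)) (hW : W ≠ []) (k : ℕ) (hk : 1 ≤ k) :
    (List.flatten (List.replicate k W)).getLast? = W.getLast? := by
  obtain ⟨m, rfl⟩ : ∃ m, k = m + 1 := ⟨k - 1, by omega⟩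
  rw [List.replicate_succ', List.flatten_append, List.flatten_cons, List.flatten_nil,
    List.append_nil, List.getLast?_append_of_ne_nil _ hW]

lemma chain'_flatten_rep (W : List (α × Bool)) (hW : W ≠ [])
    (hch : List.Chain' Rel W)
    (hCR : ∀ a ∈ W.getLast?, ∀ b ∈ W.head?, Rel a b) (k : ℕ) :
    List.Chain' Rel (List.flatten (List.replicate k W)) := by
  induction k with
  | zero => simp [List.Chain']
  | succ m ihm =>
    rw [List.replicate_succ, List.flatten_cons]
    refine List.isChain_append.2 ⟨hch, ihm, ?_⟩
    intro x hx y hy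
    rcases Nat.eq_zero_or_pos m with rfl | hm
    · simp at hy
    · rw [head?_flatten_rep W hW m hm] at hy
      exact hCR x hx y hy

/-- Counting homomorphism. -/
noncomputable def cnt (c : Fin 2) : FreeGroup (Fin 2) →* Multiplicative ℤ :=
  FreeGroup.lift (fun i => Multiplicative.ofAdd (if i = c then (1 : ℤ) else 0))

lemma cnt_mk_eq_one {c : Fin 2} {W : List (Fin 2 × Bool)}
    (hW : ∀ p ∈ W, p.1 ≠ c) : cnt c (FreeGroup.mk W) = 1 := by
  rw [cnt, FreeGroup.lift_mk]
  apply List.prod_eq_one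
  intro x hx
  simp only [List.mem_map] at hx
  obtain ⟨p, hp, rfl⟩ := hx
  have h := hW p hp
  cases p.2 <;> simp [h]

lemma zpow_word (x : Fin 2) (n : ℤ) :
    ∃ s : Bool, of x ^ n = FreeGroup.mk (List.replicate n.natAbs (x, s)) := by
  have hpos : ∀ m : ℕ, of x ^ (m : ℕ) = FreeGroup.mk (List.replicate m (x, true)) := by
    intro m
    rw [← FreeGroup.mk_toWord (x := of x ^ m), FreeGroup.toWord_of_pow]
  rcases n with m | m
  · exact ⟨true, by rw [Int.ofNat_eq_coe, zpow_natCast, hpos m]; rfl⟩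
  · refine ⟨false, ?_⟩
    rw [zpow_negSucc, hpos (m + 1), FreeGroup.inv_mk, invRev_replicate]
    rfl

lemma aux (a b : ℤ) (v : FreeGroup (Fin 2)) (k : ℕ) (hk : 2 ≤ k)
    (h : of (0 : Fin 2) ^ a * of (1 : Fin 2) ^ b = v ^ k) : a = 0 ∨ b = 0 := by
  obtain ⟨C, W, hdec, hCR⟩ := cyclic_decomp v
  have hv : v = FreeGroup.mk C * FreeGroup.mk W * (FreeGroup.mk C)⁻¹ := by
    rw [FreeGroup.inv_mk, FreeGroup.mul_mk, FreeGroup.mul_mk, ← hdec, FreeGroup.mk_toWord]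
  have hvk : v ^ k = FreeGroup.mk C * (FreeGroup.mk W) ^ k * (FreeGroup.mk C)⁻¹ := by
    rw [hv, conj_pow]
  -- counting homomorphism values
  have hcnt : ∀ c : Fin 2, (∀ p ∈ W, p.1 ≠ c) →
      cnt c (of (0 : Fin 2) ^ a * of (1 : Fin 2) ^ b) = 1 := by
    intro c hc
    rw [h, hvk]
    simp only [_root_.map_mul, map_pow, _root_.map_inv, cnt_mk_eq_one hc, one_pow, mul_one,
      mul_inv_cancel]
  have hcnt0 : cnt 0 (of (0 : Fin 2) ^ a * of (1 : Fin 2) ^ b) = Multiplicative.ofAdd a := by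
    rw [_root_.map_mul, _root_.map_zpow, _root_.map_zpow, cnt, FreeGroup.lift_apply_of, FreeGroup.lift_apply_of]
    simp only [if_pos rfl, if_neg (by decide : (1 : Fin 2) ≠ 0)]
    rw [← ofAdd_zsmul, ← ofAdd_zsmul]
    simp
  have hcnt1 : cnt 1 (of (0 : Fin 2) ^ a * of (1 : Fin 2) ^ b) = Multiplicative.ofAdd b := by
    rw [_root_.map_mul, _root_.map_zpow, _root_.map_zpow, cnt, FreeGroup.lift_apply_of, FreeGroup.lift_apply_of]
    simp only [if_pos rfl, if_neg (by decide : (0 : Fin 2) ≠ 1)]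
    rw [← ofAdd_zsmul, ← ofAdd_zsmul]
    simp
  by_cases h0 : ∀ p ∈ W, p.1 ≠ (0 : Fin 2)
  · left
    have := hcnt 0 h0
    rw [hcnt0] at this
    simpa using this
  by_cases h1 : ∀ p ∈ W, p.1 ≠ (1 : Fin 2)
  · right
    have := hcnt 1 h1
    rw [hcnt1] at this
    simpa using this
  exfalso
  push_neg at h0 h1
  obtain ⟨p, hpW, hp0⟩ := h0
  obtain ⟨q, hqW, hq1⟩ := h1
  have hWne : W ≠ [] := by rintro rfl; simp at hpW
  -- the reduced word of v ^ k
  have hchain : List.Chain' Rel (C ++ W ++ invRev C) := hdec ▸ chain'_toWord v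
  obtain ⟨hchCW, hchI, hjWI⟩ := List.isChain_append.1 hchain
  obtain ⟨hchC, hchW, hjCW⟩ := List.isChain_append.1 hchCW
  set F := List.flatten (List.replicate k W) with hF
  have hFne : F ≠ [] := by
    rw [hF]
    obtain ⟨m, rfl⟩ : ∃ m, k = m + 1 := ⟨k - 1, by omega⟩
    rw [List.replicate_succ, List.flatten_cons]
    simp [hWne]
  have hchainF : List.Chain' Rel (C ++ F ++ invRev C) := by
    refine List.isChain_append.2 ⟨List.isChain_append.2 ⟨hchC, ?_, ?_⟩, hchI, ?_⟩
    · exact chain'_flatten_rep W hWne hchW hCR k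
    · rw [head?_flatten_rep W hWne k (by omega)]
      exact hjCW
    · intro x hx y hy
      rw [List.getLast?_append_of_ne_nil _ hFne,
        getLast?_flatten_rep W hWne k (by omega)] at hx
      apply hjWI x _ y hy
      rw [List.getLast?_append_of_ne_nil _ hWne]
      exact hx
  have hvkmk : v ^ k = FreeGroup.mk (C ++ F ++ invRev C) := by
    rw [hvk, FreeGroup.pow_mk, FreeGroup.inv_mk, FreeGroup.mul_mk, FreeGroup.mul_mk]
  have hvkword : (v ^ k).toWord = C ++ F ++ invRev C := by
    rw [hvkmk, FreeGroup.toWord_mk, reduce_eq_self hchainF]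
  -- the reduced word of the left side
  obtain ⟨sa, hxa⟩ := zpow_word (0 : Fin 2) a
  obtain ⟨sb, hxb⟩ := zpow_word (1 : Fin 2) b
  set Ra := List.replicate a.natAbs ((0 : Fin 2), sa) with hRa
  set Rb := List.replicate b.natAbs ((1 : Fin 2), sb) with hRb
  have hgmk : of (0 : Fin 2) ^ a * of (1 : Fin 2) ^ b = FreeGroup.mk (Ra ++ Rb) := by
    rw [hxa, hxb, FreeGroup.mul_mk]
  have hchainRaRb : List.Chain' Rel (Ra ++ Rb) := by
    refine List.isChain_append.2 ⟨?_, ?_, ?_⟩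
    · exact List.isChain_replicate_of_rel _ (by simp [Rel])
    · exact List.isChain_replicate_of_rel _ (by simp [Rel])
    · intro x hx y hy
      rw [hRa] at hx
      rw [hRb] at hy
      have hx' : x = ((0 : Fin 2), sa) :=
        List.eq_of_mem_replicate (List.mem_of_mem_getLast? hx)
      have hy' : y = ((1 : Fin 2), sb) :=
        List.eq_of_mem_replicate (List.mem_of_mem_head? hy)
      rw [hx', hy']
      intro hcon
      have h01 : (0 : Fin 2) = 1 := hcon.1
      exact absurd h01 (by decide)
  have hgword : (of (0 : Fin 2) ^ a * of (1 : Fin 2) ^ b).toWord = Ra ++ Rb := by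
    rw [hgmk, FreeGroup.toWord_mk, reduce_eq_self hchainRaRb]
  have hEq : Ra ++ Rb = C ++ F ++ invRev C := by
    rw [← hgword, ← hvkword, h]
  -- sortedness
  have hPair : List.Pairwise (fun p q : Fin 2 × Bool => (p.1 : ℕ) ≤ (q.1 : ℕ)) (Ra ++ Rb) := by
    refine List.pairwise_append.2 ⟨?_, ?_, ?_⟩
    · exact List.pairwise_replicate.2 (Or.inr le_rfl)
    · exact List.pairwise_replicate.2 (Or.inr le_rfl)
    · intro x hx y hy
      have hx' := List.eq_of_mem_replicate hx
      have hy' := List.eq_of_mem_replicate hy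
      rw [hx', hy']
      simp
  -- W ++ W is a sublist
  obtain ⟨m, rfl⟩ : ∃ m, k = m + 2 := ⟨k - 2, by omega⟩
  have hFsplit : F = (W ++ W) ++ List.flatten (List.replicate m W) := by
    rw [hF]
    rw [show m + 2 = (m + 1) + 1 from rfl, List.replicate_succ, List.replicate_succ,
      List.flatten_cons, List.flatten_cons, List.append_assoc]
  have hinfix : (W ++ W) <:+: Ra ++ Rb := by
    refine ⟨C, List.flatten (List.replicate m W) ++ invRev C, ?_⟩
    rw [hEq, hFsplit]
    simp [List.append_assoc]
  have hPW : List.Pairwise (fun p q : Fin 2 × Bool => (p.1 : ℕ) ≤ (q.1 : ℕ)) (W ++ W) :=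
    List.Pairwise.sublist hinfix.sublist hPair
  have := (List.pairwise_append.1 hPW).2.2 q hqW p hpW
  rw [hp0, hq1] at this
  simp at this

end Stmt11Aux

/-- In the free group on x, y: if xʳ y⁻ʳ' xʳ' is a proper power wᵏ (k ≥ 2),
then r = -r' or r' = 0. -/
theorem stmt11 (r r' : ℤ) (w : FreeGroup (Fin 2)) (k : ℕ) (hk : 2 ≤ k)
    (h : of (0 : Fin 2) ^ r * of (1 : Fin 2) ^ (-r') * of (0 : Fin 2) ^ r' = w ^ k) :
    r = -r' ∨ r' = 0 := by
  have key : of (0 : Fin 2) ^ (r + r') * of (1 : Fin 2) ^ (-r')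
      = (of (0 : Fin 2) ^ r' * w * (of (0 : Fin 2) ^ r')⁻¹) ^ k := by
    rw [conj_pow, ← h]
    group
  rcases Stmt11Aux.aux (r + r') (-r') _ k hk key with h1 | h2
  · left; omega
  · right; omega
end

section
/- In the free group on y, z, the equation z^s y^q = (z^s y)^s (y^r z^γ y^{r'})^q with q ≠ 0, γ ∈ {+1, -1}, and integers r, r', s, has a solution only when (q, r, γ, r', s) = (2, -1, -1, 1, 2). -/
open FreeGroup

@[ext] structure Hg where
  a : ℤ
  b : ℤ
  c : ℤ

namespace Hg

instance : Mul Hg := ⟨fun x y => ⟨x.a + y.a, x.b + y.b, x.c + y.c + 2 * x.a * y.b⟩⟩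
instance : One Hg := ⟨⟨0, 0, 0⟩⟩
instance : Inv Hg := ⟨fun x => ⟨-x.a, -x.b, -x.c + 2 * x.a * x.b⟩⟩

lemma mul_def (x y : Hg) : x * y = ⟨x.a + y.a, x.b + y.b, x.c + y.c + 2 * x.a * y.b⟩ := rfl
lemma one_def : (1 : Hg) = ⟨0, 0, 0⟩ := rfl
lemma inv_def (x : Hg) : x⁻¹ = ⟨-x.a, -x.b, -x.c + 2 * x.a * x.b⟩ := rfl

instance : Group Hg where
  mul_assoc x y z := by simp only [mul_def]; ext <;> dsimp <;> ring
  one_mul x := by simp only [mul_def, one_def]; ext <;> dsimp <;> ring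
  mul_one x := by simp only [mul_def, one_def]; ext <;> dsimp <;> ring
  inv_mul_cancel x := by simp only [mul_def, inv_def, one_def]; ext <;> dsimp <;> ring

lemma zpow_def (g : Hg) (n : ℤ) :
    g ^ n = ⟨n * g.a, n * g.b, n * g.c + n * (n - 1) * g.a * g.b⟩ := by
  induction n using Int.induction_on with
  | zero => simp [one_def]
  | succ k ih => rw [zpow_add_one, ih, mul_def]; ext <;> dsimp <;> ring
  | pred k ih => rw [zpow_sub_one, ih, inv_def, mul_def]; ext <;> dsimp <;> ring

end Hg

/-- In the free group on y, z (y = of 0, z = of 1): the equation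
zˢ y^q = (zˢ y)ˢ (yʳ z^γ yʳ')^q with q ≠ 0 and γ = ±1 has a solution only when
(q, r, γ, r', s) = (2, -1, -1, 1, 2). -/
theorem stmt12 (q r γ r' s : ℤ) (hq : q ≠ 0) (hγ : γ = 1 ∨ γ = -1)
    (h : of (1 : Fin 2) ^ s * of (0 : Fin 2) ^ q =
      (of (1 : Fin 2) ^ s * of (0 : Fin 2)) ^ s *
        (of (0 : Fin 2) ^ r * of (1 : Fin 2) ^ γ * of (0 : Fin 2) ^ r') ^ q) :
    q = 2 ∧ r = -1 ∧ γ = -1 ∧ r' = 1 ∧ s = 2 := by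
  -- Map into the Heisenberg-like group Hg to get 3 integer equations
  have h2 := congrArg (FreeGroup.lift (fun i : Fin 2 => if i = 0 then (⟨1,0,0⟩ : Hg) else ⟨0,1,0⟩)) h
  simp only [_root_.map_mul, map_zpow, FreeGroup.lift_apply_of] at h2
  norm_num at h2
  simp only [Hg.zpow_def, Hg.mul_def, Hg.mk.injEq] at h2
  obtain ⟨e1, e2, e3⟩ := h2
  ring_nf at e1 e2 e3
  rcases hγ with rfl | rfl
  · -- γ = 1 : this case leads to (q,r,r',s) = (-2,2,0,2), refuted in S₃
    exfalso
    have hq' : q = s - s ^ 2 := by linarith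
    have hs0 : s ≠ 0 := by
      rintro rfl
      norm_num at hq'
      exact hq hq'
    have key : s * ((s - 1) * (r + r' - 1)) = s * 1 := by
      linear_combination (r + r' - 1) * hq' + e1
    have hc : (s - 1) * (r + r' - 1) = 1 := mul_left_cancel₀ hs0 key
    rcases Int.mul_eq_one_iff_eq_one_or_neg_one.mp hc with ⟨h1, h3⟩ | ⟨h1, h3⟩
    · have hs2 : s = 2 := by omega
      subst hs2
      have hq2 : q = -2 := by omega
      subst hq2
      have hr : r = 2 := by nlinarith [e3]
      have hr' : r' = 0 := by omega
      subst hr hr'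
      -- refute in S₃
      have hp3 := congrArg (FreeGroup.lift (fun i : Fin 2 =>
        if i = 0 then Equiv.swap (0 : Fin 3) 1 else finRotate 3)) h
      simp only [_root_.map_mul, map_zpow, FreeGroup.lift_apply_of] at hp3
      norm_num at hp3
      revert hp3
      decide
    · omega
  · -- γ = -1 : the genuine solution
    have hq' : q = s ^ 2 - s := by linarith
    have hs0 : s ≠ 0 := by
      rintro rfl
      norm_num at hq'
      exact hq hq'
    have key : s * ((s - 1) * (1 - r - r')) = s * 1 := by
      linear_combination (r + r' - 1) * hq' + e1
    have hc : (s - 1) * (1 - r - r') = 1 := mul_left_cancel₀ hs0 key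
    rcases Int.mul_eq_one_iff_eq_one_or_neg_one.mp hc with ⟨h1, h3⟩ | ⟨h1, h3⟩
    · have hs2 : s = 2 := by omega
      subst hs2
      have hq2 : q = 2 := by omega
      subst hq2
      have hr : r = -1 := by nlinarith [e3]
      have hr' : r' = 1 := by omega
      exact ⟨rfl, hr, rfl, hr', rfl⟩
    · omega
end
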